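/- Let 0 < D < 1 and F ⊆ {0,…,N−1}. For ũ_F ∈ {0,1}^{|F|} define the quantization-error distribution 𝒬^{ũ_F}(x̄) = Σ_{ȳ : ((ȳ⊕x̄)H_n^{−1})_F = ũ_F} 2^{−N} ∏_{i∈F^c} P(v_i | v₀^{i−1}, ȳ), where v̄ = (ȳ ⊕ x̄)H_n^{−1}. Then 𝒬^{ũ_F} is independent of ũ_F: for all ũ_F, ũ'_F ∈ {0,1}^{|F|} and all x̄ ∈ {0,1}^N, 𝒬^{ũ_F}(x̄) = 𝒬^{ũ'_F}(x̄). -/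

import Mathlib

open Finset

noncomputable section

/-- The polarization kernel `G₂ = [[1,0],[1,1]]` over GF(2). -/
def G2 : Matrix (Fin 2) (Fin 2) (ZMod 2) := !![1, 0; 1, 1]

/-- Index identification `Fin 2 × Fin (2^n) ≃ Fin (2^(n+1))`. -/
def finPowEquiv (n : ℕ) : Fin 2 × Fin (2 ^ n) ≃ Fin (2 ^ (n + 1)) :=
  finProdFinEquiv.trans (finCongr (by rw [pow_succ]; ring))

/-- The `n`-fold Kronecker power `G₂^{⊗n}` over GF(2). -/
def kronPow : (n : ℕ) → Matrix (Fin (2 ^ n)) (Fin (2 ^ n)) (ZMod 2)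
  | 0 => 1
  | n + 1 => Matrix.reindex (finPowEquiv n) (finPowEquiv n)
      (Matrix.kroneckerMap (· * ·) G2 (kronPow n))

/-- Reversal of the `n`-bit binary expansion of `i`. -/
def bitRevNat (n i : ℕ) : ℕ :=
  ∑ k ∈ Finset.range n, if Nat.testBit i (n - 1 - k) then 2 ^ k else 0

lemma sum_range_two_pow_lt (n : ℕ) : ∑ k ∈ Finset.range n, 2 ^ k < 2 ^ n := by
  induction n with
  | zero => simp
  | succ m ih => rw [Finset.sum_range_succ, pow_succ]; omega

lemma bitRevNat_lt (n i : ℕ) : bitRevNat n i < 2 ^ n := by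
  have h1 : bitRevNat n i ≤ ∑ k ∈ Finset.range n, 2 ^ k :=
    Finset.sum_le_sum (fun k _ => by split <;> simp)
  have h2 := sum_range_two_pow_lt n
  omega

/-- The bit-reversal permutation matrix `Aₙ`. -/
def bitRevMatrix (n : ℕ) : Matrix (Fin (2 ^ n)) (Fin (2 ^ n)) (ZMod 2) :=
  fun i j => if (j : ℕ) = bitRevNat n (i : ℕ) then 1 else 0

/-- The polar transform matrix `Hₙ = Aₙ G₂^{⊗n}`. -/
def polarH (n : ℕ) : Matrix (Fin (2 ^ n)) (Fin (2 ^ n)) (ZMod 2) :=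
  bitRevMatrix n * kronPow n

/-- BSC(D) transition probability `W(y∣x)`. -/
def bsc (D : ℝ) (y x : ZMod 2) : ℝ := if y = x then 1 - D else D

/-- The polar transform `x̄ = ū Hₙ` of a word `ū`. -/
def polarEnc (n : ℕ) (u : Fin (2 ^ n) → ZMod 2) : Fin (2 ^ n) → ZMod 2 :=
  Matrix.vecMul u (polarH n)

/-- `W^{(i)}(ȳ, u₀^{i−1} ∣ u_i)`; it depends on `u` only through coordinates `≤ i`,
the coordinates `> i` being summed out. -/
def Wi (D : ℝ) (n : ℕ) (y : Fin (2 ^ n) → ZMod 2) (i : Fin (2 ^ n))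
    (u : Fin (2 ^ n) → ZMod 2) : ℝ :=
  ((2 : ℝ) ^ (2 ^ n - 1))⁻¹ *
    ∑ v ∈ Finset.univ.filter (fun v : Fin (2 ^ n) → ZMod 2 => ∀ j, j ≤ i → v j = u j),
      ∏ j, bsc D (y j) (polarEnc n v j)

/-- The posterior `P(u_i ∣ u₀^{i−1}, ȳ)`. -/
def post (D : ℝ) (n : ℕ) (y : Fin (2 ^ n) → ZMod 2) (i : Fin (2 ^ n))
    (u : Fin (2 ^ n) → ZMod 2) : ℝ :=
  Wi D n y i u /
    (Wi D n y i (Function.update u i 0) + Wi D n y i (Function.update u i 1))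

/-- The quantization-error distribution `𝒬^{ũ_F}(x̄)`: the probability (over the uniform
source word `ȳ` and the randomized rounding) that the quantization error `ȳ ⊕ ūHₙ` equals
`x̄`; the error equals `x̄` iff `ū = (ȳ ⊕ x̄)Hₙ⁻¹`, which requires
`((ȳ ⊕ x̄)Hₙ⁻¹)_F = ũ_F` and occurs with probability `∏_{i∈Fᶜ} P(v_i ∣ v₀^{i−1}, ȳ)`
where `v̄ = (ȳ ⊕ x̄)Hₙ⁻¹`. -/
def quantDist (D : ℝ) (n : ℕ) (F : Finset (Fin (2 ^ n))) (ut : Fin (2 ^ n) → ZMod 2)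
    (x : Fin (2 ^ n) → ZMod 2) : ℝ :=
  ∑ y ∈ Finset.univ.filter (fun y : Fin (2 ^ n) → ZMod 2 =>
      ∀ i ∈ F, Matrix.vecMul (y + x) (polarH n)⁻¹ i = ut i),
    ((2 : ℝ) ^ (2 ^ n))⁻¹ *
      ∏ i ∈ Fᶜ, post D n y i (Matrix.vecMul (y + x) (polarH n)⁻¹)


section Aux
open Matrix Kronecker

lemma testBit_sum_aux (b : ℕ → Bool) : ∀ (n m : ℕ),
    Nat.testBit (∑ k ∈ Finset.range n, if b k then 2 ^ k else 0) m
      = (decide (m < n) && b m) := by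
  intro n
  induction n with
  | zero => simp
  | succ n ih =>
    intro m
    have hS : (∑ k ∈ Finset.range n, if b k then 2 ^ k else 0) < 2 ^ n := by
      calc (∑ k ∈ Finset.range n, if b k then 2 ^ k else 0)
          ≤ ∑ k ∈ Finset.range n, 2 ^ k :=
            Finset.sum_le_sum (fun k _ => by split <;> simp)
        _ < 2 ^ n := sum_range_two_pow_lt n
    rw [Finset.sum_range_succ]
    by_cases hb : b n
    · rw [if_pos hb, add_comm]
      rcases lt_trichotomy m n with hm | hm | hm
      · rw [Nat.testBit_two_pow_add_gt hm, ih]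
        simp [hm, Nat.lt_succ_of_lt hm]
      · subst hm
        rw [Nat.testBit_two_pow_add_eq, Nat.testBit_lt_two_pow hS]
        simp [hb]
      · have : 2 ^ n + (∑ k ∈ Finset.range n, if b k then 2 ^ k else 0) < 2 ^ m := by
          have h2 : 2 ^ (n+1) ≤ 2 ^ m := Nat.pow_le_pow_right (by norm_num) hm
          have : 2 ^ n + 2 ^ n = 2 ^ (n+1) := by ring
          omega
        rw [Nat.testBit_lt_two_pow this]
        simp; omega
    · rw [if_neg hb, add_zero, ih]
      rcases eq_or_ne m n with hm | hm
      · subst hm; simp [hb]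
      · by_cases h : m < n
        · simp [h, Nat.lt_succ_of_lt h]
        · have : ¬ m < n + 1 := by omega
          simp [h, this]

lemma testBit_bitRevNat (n i m : ℕ) :
    Nat.testBit (bitRevNat n i) m = (decide (m < n) && Nat.testBit i (n - 1 - m)) :=
  testBit_sum_aux (fun k => Nat.testBit i (n - 1 - k)) n m

lemma bitRevNat_involutive {n i : ℕ} (h : i < 2 ^ n) : bitRevNat n (bitRevNat n i) = i := by
  apply Nat.eq_of_testBit_eq
  intro m
  rw [testBit_bitRevNat, testBit_bitRevNat]
  by_cases hm : m < n
  · have h1 : n - 1 - m < n := by omega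
    have h2 : n - 1 - (n - 1 - m) = m := by omega
    simp [hm, h1, h2]
  · have : Nat.testBit i m = false :=
      Nat.testBit_lt_two_pow
        (lt_of_lt_of_le h (Nat.pow_le_pow_right (by norm_num) (by omega)))
    simp [hm, this]

lemma G2_mul_G2 : G2 * G2 = 1 := by
  unfold G2
  ext i j
  fin_cases i <;> fin_cases j <;>
    simp [Matrix.mul_apply, Fin.sum_univ_two, Matrix.one_apply] <;> decide

lemma kronPow_mul_self (n : ℕ) : kronPow n * kronPow n = 1 := by
  induction n with
  | zero => simp [kronPow]
  | succ n ih =>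
    show Matrix.reindex (finPowEquiv n) (finPowEquiv n) (G2 ⊗ₖ kronPow n) *
      Matrix.reindex (finPowEquiv n) (finPowEquiv n) (G2 ⊗ₖ kronPow n) = 1
    simp only [Matrix.reindex_apply]
    rw [Matrix.submatrix_mul_equiv (G2 ⊗ₖ kronPow n) (G2 ⊗ₖ kronPow n) _ (finPowEquiv n).symm _,
      ← Matrix.mul_kronecker_mul, G2_mul_G2, ih, Matrix.one_kronecker_one,
      Matrix.submatrix_one_equiv]

lemma bitRevMatrix_mul_self (n : ℕ) : bitRevMatrix n * bitRevMatrix n = 1 := by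
  ext i k
  rw [Matrix.mul_apply]
  unfold bitRevMatrix
  have key : ∀ j : Fin (2 ^ n),
      ((if ((j : ℕ) = bitRevNat n (i : ℕ)) then (1 : ZMod 2) else 0) *
       (if ((k : ℕ) = bitRevNat n (j : ℕ)) then 1 else 0))
      = if j = (⟨bitRevNat n (i : ℕ), bitRevNat_lt n i⟩ : Fin (2 ^ n)) then
          (if ((k : ℕ) = bitRevNat n (j : ℕ)) then (1 : ZMod 2) else 0) else 0 := by
    intro j
    by_cases h : (j : ℕ) = bitRevNat n (i : ℕ)
    · rw [if_pos h, if_pos (Fin.ext h), one_mul]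
    · rw [if_neg h, if_neg (fun hh => h (congrArg Fin.val hh)), zero_mul]
  simp_rw [key]
  rw [Finset.sum_ite_eq' Finset.univ]
  simp only [Finset.mem_univ, if_true]
  have hinv : bitRevNat n ((⟨bitRevNat n (i : ℕ), bitRevNat_lt n i⟩ : Fin (2 ^ n)) : ℕ)
      = (i : ℕ) := bitRevNat_involutive i.isLt
  rw [hinv]
  by_cases h : k = i
  · subst h; simp [Matrix.one_apply]
  · rw [Matrix.one_apply_ne (fun hh => h hh.symm), if_neg (fun hh => h (Fin.ext hh))]

lemma polarH_mul_inv (n : ℕ) : polarH n * (polarH n)⁻¹ = 1 := by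
  have h : polarH n * (kronPow n * bitRevMatrix n) = 1 := by
    unfold polarH
    rw [Matrix.mul_assoc, ← Matrix.mul_assoc (kronPow n), kronPow_mul_self,
      Matrix.one_mul, bitRevMatrix_mul_self]
  rw [Matrix.inv_eq_right_inv h, h]

lemma zmod2_cases (a : ZMod 2) : a = 0 ∨ a = 1 := by revert a; decide

lemma bsc_shift (D : ℝ) (a y x : ZMod 2) : bsc D (y + a) x = bsc D y (x + a) := by
  unfold bsc
  by_cases h : y + a = x
  · rw [if_pos h, if_pos (by rw [← h, add_assoc, CharTwo.add_self_eq_zero, add_zero])]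
  · rw [if_neg h, if_neg (fun hh => h (by rw [hh, add_assoc, CharTwo.add_self_eq_zero, add_zero]))]

lemma Wi_shift (D : ℝ) (n : ℕ) (y w u : Fin (2 ^ n) → ZMod 2) (i : Fin (2 ^ n)) :
    Wi D n (y + polarEnc n w) i (u + w) = Wi D n y i u := by
  unfold Wi
  congr 1
  rw [Finset.sum_filter, Finset.sum_filter]
  apply Fintype.sum_equiv (Equiv.addRight w)
  intro v
  simp only [Equiv.coe_addRight]
  have hcond : (∀ j, j ≤ i → v j = (u + w) j) ↔ (∀ j, j ≤ i → (v + w) j = u j) := by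
    constructor <;> intro h j hj <;> have h' := h j hj <;>
      simp only [Pi.add_apply] at h' ⊢
    · rw [h', add_assoc, CharTwo.add_self_eq_zero, add_zero]
    · rw [← h', add_assoc, CharTwo.add_self_eq_zero, add_zero]
  have hterm : (∏ j, bsc D ((y + polarEnc n w) j) (polarEnc n v j))
      = ∏ j, bsc D (y j) (polarEnc n (v + w) j) := by
    apply Finset.prod_congr rfl
    intro j _
    have henc : polarEnc n (v + w) j = polarEnc n v j + polarEnc n w j := by
      unfold polarEnc
      rw [Matrix.add_vecMul]
      rfl
    show bsc D (y j + polarEnc n w j) (polarEnc n v j) = _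
    rw [bsc_shift, henc]
  by_cases hc : ∀ j, j ≤ i → v j = (u + w) j
  · rw [if_pos hc, hterm]; exact (if_pos (hcond.mp hc)).symm
  · rw [if_neg hc]; exact (if_neg (fun h => hc (hcond.mpr h))).symm

lemma post_shift (D : ℝ) (n : ℕ) (y w u : Fin (2 ^ n) → ZMod 2) (i : Fin (2 ^ n)) :
    post D n (y + polarEnc n w) i (u + w) = post D n y i u := by
  unfold post
  rw [Wi_shift]
  have hupd : ∀ b : ZMod 2,
      Function.update (u + w) i b = Function.update u i (b + w i) + w := by
    intro b
    funext j
    by_cases h : j = i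
    · subst h
      simp only [Function.update_self, Pi.add_apply]
      rw [add_assoc, CharTwo.add_self_eq_zero, add_zero]
    · simp [Function.update_of_ne h]
  rw [hupd 0, hupd 1, Wi_shift, Wi_shift]
  rcases zmod2_cases (w i) with h | h <;> rw [h]
  · norm_num
  · have h1 : (0 : ZMod 2) + 1 = 1 := by decide
    have h2 : (1 : ZMod 2) + 1 = 0 := by decide
    rw [h1, h2, add_comm (Wi D n y i (Function.update u i 1))]

end Aux

/-- **The quantization-error distribution does not depend on the frozen vector.** -/
theorem quantDist_independent_of_frozen_bits (D : ℝ) (hD0 : 0 < D) (hD1 : D < 1) (n : ℕ)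
    (F : Finset (Fin (2 ^ n))) (ut ut' : Fin (2 ^ n) → ZMod 2)
    (x : Fin (2 ^ n) → ZMod 2) :
    quantDist D n F ut x = quantDist D n F ut' x := by
  classical
  set w : Fin (2 ^ n) → ZMod 2 := fun i => if i ∈ F then ut' i - ut i else 0 with hw
  unfold quantDist
  rw [Finset.sum_filter, Finset.sum_filter]
  apply Fintype.sum_equiv (Equiv.addRight (polarEnc n w))
  intro y
  have hv : Matrix.vecMul ((Equiv.addRight (polarEnc n w)) y + x) (polarH n)⁻¹
      = Matrix.vecMul (y + x) (polarH n)⁻¹ + w := by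
    show Matrix.vecMul (y + polarEnc n w + x) (polarH n)⁻¹ = _
    rw [add_right_comm y (polarEnc n w) x, Matrix.add_vecMul]
    congr 1
    unfold polarEnc
    rw [Matrix.vecMul_vecMul, polarH_mul_inv, Matrix.vecMul_one]
  simp only [Equiv.coe_addRight] at hv ⊢
  simp only [hv]
  have hcond : (∀ i ∈ F, (Matrix.vecMul (y + x) (polarH n)⁻¹ + w) i = ut' i)
      ↔ (∀ i ∈ F, Matrix.vecMul (y + x) (polarH n)⁻¹ i = ut i) := by
    constructor
    · intro h i hi
      have h' := h i hi
      simp only [Pi.add_apply, hw, if_pos hi] at h'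
      linear_combination h'
    · intro h i hi
      have h' := h i hi
      simp only [Pi.add_apply, hw, if_pos hi]
      linear_combination h'
  by_cases hc : ∀ i ∈ F, Matrix.vecMul (y + x) (polarH n)⁻¹ i = ut i
  · rw [if_pos hc, if_pos (hcond.mpr hc)]
    congr 1
    apply Finset.prod_congr rfl
    intro i _
    exact (post_shift D n y w (Matrix.vecMul (y + x) (polarH n)⁻¹) i).symm
  · rw [if_neg hc, if_neg (fun h => hc (hcond.mp h))]


end
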